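/- Let X = ℝ and ℋ := { ψ_{a,b} : a, b ∈ ℝ } where ψ_{a,b}(x) := a x² + b, equipped with the topology of pointwise convergence. If f, g : ℝ → ℝ ∪ {+∞} are ℋ-convex and dom f ∩ dom g ≠ ∅, then cl( supp f + supp g ) is an ℋ-convex set and supp (f + g) = cl( supp f + supp g ), where the sum of support sets is the Minkowski sum of sets of functions and cl denotes closure in the pointwise convergence topology. Equivalently, cl( epi f* + epi g* ) = epi (f + g)*, where conjugates are taken relative to 𝓛 := { x ↦ a x² : a ∈ ℝ } and the closure is taken in 𝓛 × ℝ. -/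

import Mathlib

open Set
open scoped Pointwise

variable {X : Type*}

/-- A space of abstract linear functions on `X`: a nonempty family of real-valued
functions closed under addition, each of whose members admits additive decompositions
of every length `m ≥ 1` inside the family. -/
def IsLinSpace (L : Set (X → ℝ)) : Prop :=
  L.Nonempty ∧
    (∀ l₁ ∈ L, ∀ l₂ ∈ L, l₁ + l₂ ∈ L) ∧
    (∀ l ∈ L, ∀ m : ℕ, 1 ≤ m →
      ∃ g : Fin m → (X → ℝ), (∀ i, g i ∈ L) ∧ l = ∑ i, g i)

/-- Fenchel conjugate of `f : X → ℝ ∪ {+∞}`: `f*(l) = sup_x (l x - f x)`. -/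
noncomputable def fconj (f : X → EReal) (l : X → ℝ) : EReal :=
  ⨆ x : X, ((l x : EReal) - f x)

/-- Abstract biconjugate `f**(x) = sup_{l ∈ L} (l x - f*(l))`. -/
noncomputable def biconj (L : Set (X → ℝ)) (f : X → EReal) (x : X) : EReal :=
  ⨆ l ∈ L, ((l x : EReal) - fconj f l)

/-- ε-subdifferential of `f` at `x` (empty whenever `x ∉ dom f`, i.e. `f x = ⊤`):
`l ∈ ∂_ε f(x)` iff `l ∈ L`, `f x < ⊤` and `f y - f x - (l y - l x) + ε ≥ 0` for all `y`. -/
def subdiff (L : Set (X → ℝ)) (f : X → EReal) (ε : ℝ) (x : X) : Set (X → ℝ) :=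
  {l | l ∈ L ∧ f x < ⊤ ∧ ∀ y, f x + ((l y - l x : ℝ) : EReal) ≤ f y + (ε : EReal)}

/-- Minkowski sum of finitely many subsets of an additive commutative monoid. -/
def minkSum {α : Type*} [AddCommMonoid α] {m : ℕ} (S : Fin m → Set α) : Set α :=
  {a | ∃ g : Fin m → α, (∀ i, g i ∈ S i) ∧ a = ∑ i, g i}

/-- Infimal convolution (over `L`) of finitely many functions,
with the infimum over the empty set equal to `+∞`. -/
noncomputable def infConv (L : Set (X → ℝ)) {m : ℕ}
    (φ : Fin m → (X → ℝ) → EReal) (l : X → ℝ) : EReal :=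
  ⨅ (g : Fin m → (X → ℝ)) (_ : ∀ i, g i ∈ L) (_ : ∑ i, g i = l), ∑ i, φ i (g i)

/-- The space of abstract affine functions generated by `L`: vertical shifts of members of `L`. -/
def Hspace (L : Set (X → ℝ)) : Set (X → ℝ) :=
  {h | ∃ l ∈ L, ∃ c : ℝ, h = fun x => l x + c}

/-- Support set of `f` inside a family `H` of functions: all members of `H` minorizing `f`. -/
def suppIn (H : Set (X → ℝ)) (f : X → EReal) : Set (X → ℝ) :=
  {h | h ∈ H ∧ ∀ x, (h x : EReal) ≤ f x}

/-- `f` is abstract convex w.r.t. the family `H`: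
`f` is the upper envelope of a nonempty subfamily of `H`. -/
def ConvexIn (H : Set (X → ℝ)) (f : X → EReal) : Prop :=
  ∃ S : Set (X → ℝ), S.Nonempty ∧ S ⊆ H ∧ ∀ x, f x = ⨆ h ∈ S, (h x : EReal)

/-- Abstract convexity of a subset `C` of the family `L` (separation property):
every `l₀ ∈ L \ C` is strictly separated from `C` at some point of `X`. -/
def ConvexSetIn (L : Set (X → ℝ)) (C : Set (X → ℝ)) : Prop :=
  C ⊆ L ∧ ∀ l₀ ∈ L, l₀ ∉ C → ∃ x, (⨆ l ∈ C, (l x : EReal)) < (l₀ x : EReal)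

/-- Epigraph of the conjugate of `f`, as a subset of `𝓛 × ℝ`. -/
def epiConj (L : Set (X → ℝ)) (f : X → EReal) : Set ((X → ℝ) × ℝ) :=
  {p | p.1 ∈ L ∧ fconj f p.1 ≤ (p.2 : EReal)}

/-- The abstract linear function `φ_a : x ↦ a x²` on `ℝ`. -/
noncomputable def phiQ (a : ℝ) : ℝ → ℝ := fun x => a * x ^ 2

/-- The abstract affine function `ψ_{a,b} : x ↦ a x² + b` on `ℝ`. -/
noncomputable def psiQ (a b : ℝ) : ℝ → ℝ := fun x => a * x ^ 2 + b

/-- The space `𝓛 = {φ_a : a ∈ ℝ}` of abstract linear functions on `ℝ`. -/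
def Lq : Set (ℝ → ℝ) := Set.range phiQ

/-- The space `ℋ = {ψ_{a,b} : a, b ∈ ℝ}` of abstract affine functions on `ℝ`. -/
def Hq : Set (ℝ → ℝ) := {h | ∃ a b : ℝ, h = psiQ a b}

/-! ### Auxiliary machinery for statement 19 -/

section Stmt19Aux

/-- The set of coefficient pairs `(a, b)` with `ψ_{a,b} ≤ f`. -/
def PS (f : ℝ → EReal) : Set (ℝ × ℝ) :=
  {ab | ∀ x : ℝ, ((ab.1 * x ^ 2 + ab.2 : ℝ) : EReal) ≤ f x}

lemma S19.exists_coe (w : EReal) (h1 : w ≠ ⊥) (h2 : w ≠ ⊤) : ∃ r : ℝ, w = (r : EReal) := by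
  induction w using EReal.rec
  · exact absurd rfl h1
  · exact ⟨_, rfl⟩
  · exact absurd rfl h2

lemma S19.split (A B : EReal) (hA : A ≠ ⊥) (hB : B ≠ ⊥) (r : ℝ) (h : (r : EReal) < A + B) :
    ∃ c c' : ℝ, (c : EReal) < A ∧ (c' : EReal) < B ∧ r ≤ c + c' := by
  induction A using EReal.rec with
  | bot => exact absurd rfl hA
  | top =>
    induction B using EReal.rec with
    | bot => exact absurd rfl hB
    | top => exact ⟨r, 0, by simp, by simp, by simp⟩
    | coe b =>
      exact ⟨r - b + 1, b - 1, EReal.coe_lt_top _, by exact_mod_cast by linarith, by linarith⟩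
  | coe a =>
    induction B using EReal.rec with
    | bot => exact absurd rfl hB
    | top => exact ⟨a - 1, r - a + 1, by exact_mod_cast by linarith, EReal.coe_lt_top _, by linarith⟩
    | coe b =>
      have hr : r < a + b := by exact_mod_cast h
      exact ⟨a - (a + b - r)/2, b - (a + b - r)/2, by exact_mod_cast by linarith,
        by exact_mod_cast by linarith, by linarith⟩

lemma S19.esub (r s : ℝ) (w : EReal) (hw : w ≠ ⊥) :
    ((r : EReal) - w ≤ (s : EReal)) ↔ (((r - s : ℝ) : EReal) ≤ w) := by
  induction w using EReal.rec with
  | bot => exact absurd rfl hw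
  | top => simp
  | coe w' =>
    rw [← EReal.coe_sub, EReal.coe_le_coe_iff, EReal.coe_le_coe_iff]
    constructor <;> intro <;> linarith

variable {f : ℝ → EReal} {S : Set (ℝ → ℝ)}

lemma S19.le_rep (hrep : ∀ x, f x = ⨆ h ∈ S, (h x : EReal)) {h : ℝ → ℝ} (hh : h ∈ S) (x : ℝ) :
    ((h x : ℝ) : EReal) ≤ f x := by
  rw [hrep x]; exact le_iSup₂ (f := fun (h : ℝ → ℝ) (_ : h ∈ S) => ((h x : ℝ) : EReal)) h hh

lemma S19.mem_PS_of_mem (hSH : S ⊆ Hq) (hrep : ∀ x, f x = ⨆ h ∈ S, (h x : EReal))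
    {h} (hh : h ∈ S) : ∃ a b : ℝ, h = psiQ a b ∧ (a, b) ∈ PS f := by
  obtain ⟨a, b, rfl⟩ := hSH hh
  exact ⟨a, b, rfl, fun x => S19.le_rep hrep hh x⟩

lemma S19.PS_nonempty (hf : ConvexIn Hq f) : (PS f).Nonempty := by
  obtain ⟨S, ⟨h₀, hh₀⟩, hSH, hrep⟩ := hf
  obtain ⟨a, b, -, hab⟩ := S19.mem_PS_of_mem hSH hrep hh₀
  exact ⟨(a, b), hab⟩

lemma S19.PS_exists_gt (hSH : S ⊆ Hq) (hrep : ∀ x, f x = ⨆ h ∈ S, (h x : EReal))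
    {x : ℝ} {c : ℝ} (hc : (c : EReal) < f x) :
    ∃ p ∈ PS f, c < p.1 * x ^ 2 + p.2 := by
  rw [hrep x] at hc
  obtain ⟨h, hc⟩ := lt_iSup_iff.1 hc
  obtain ⟨hhS, hc⟩ := lt_iSup_iff.1 hc
  obtain ⟨a, b, rfl, hmem⟩ := S19.mem_PS_of_mem hSH hrep hhS
  refine ⟨(a, b), hmem, ?_⟩
  have : c < psiQ a b x := by exact_mod_cast hc
  simpa [psiQ] using this

lemma S19.psi_sqrt (a b x : ℝ) : psiQ a b (Real.sqrt (x ^ 2)) = psiQ a b x := by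
  simp only [psiQ, Real.sq_sqrt (sq_nonneg x)]

lemma S19.f_sqrt_sq (hSH : S ⊆ Hq) (hrep : ∀ x, f x = ⨆ h ∈ S, (h x : EReal)) (x : ℝ) :
    f (Real.sqrt (x ^ 2)) = f x := by
  rw [hrep, hrep]
  apply le_antisymm
  · apply iSup₂_le; intro h hh
    obtain ⟨a, b, rfl⟩ := hSH hh
    rw [S19.psi_sqrt]
    exact le_iSup₂ (f := fun (h : ℝ → ℝ) (_ : h ∈ S) => ((h x : ℝ) : EReal)) _ hh
  · apply iSup₂_le; intro h hh
    obtain ⟨a, b, rfl⟩ := hSH hh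
    rw [← S19.psi_sqrt a b x]
    exact le_iSup₂ (f := fun (h : ℝ → ℝ) (_ : h ∈ S) => ((h (Real.sqrt (x ^ 2)) : ℝ) : EReal)) _ hh

lemma S19.conv_upper (hSH : S ⊆ Hq) (hrep : ∀ x, f x = ⨆ h ∈ S, (h x : EReal))
    {x y θ c d : ℝ} (hθ0 : 0 ≤ θ) (hθ1 : θ ≤ 1)
    (hc : f x ≤ (c : EReal)) (hd : f y ≤ (d : EReal)) :
    f (Real.sqrt (θ * x ^ 2 + (1 - θ) * y ^ 2)) ≤ ((θ * c + (1 - θ) * d : ℝ) : EReal) := by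
  rw [hrep]
  apply iSup₂_le; intro h hh
  obtain ⟨a, b, rfl⟩ := hSH hh
  have h1 : psiQ a b x ≤ c := by exact_mod_cast (S19.le_rep hrep hh x).trans hc
  have h2 : psiQ a b y ≤ d := by exact_mod_cast (S19.le_rep hrep hh y).trans hd
  have ht : (0:ℝ) ≤ θ * x ^ 2 + (1 - θ) * y ^ 2 := by nlinarith [sq_nonneg x, sq_nonneg y]
  have hval : psiQ a b (Real.sqrt (θ * x ^ 2 + (1 - θ) * y ^ 2))
      = θ * psiQ a b x + (1 - θ) * psiQ a b y := by
    simp only [psiQ]; rw [Real.sq_sqrt ht]; ring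
  rw [hval]
  apply EReal.coe_le_coe_iff.2
  nlinarith [h1, h2]

lemma S19.PS_convex (f : ℝ → EReal) : Convex ℝ (PS f) := by
  intro p hp q hq s t hs ht hst
  intro x
  have h1 := hp x; have h2 := hq x
  have hco : ((s • p + t • q).1 * x ^ 2 + (s • p + t • q).2 : ℝ)
      = s * (p.1 * x ^ 2 + p.2) + t * (q.1 * x ^ 2 + q.2) := by
    simp only [Prod.fst_add, Prod.snd_add, Prod.smul_fst, Prod.smul_snd, smul_eq_mul]
    ring
  show (((s • p + t • q).1 * x ^ 2 + (s • p + t • q).2 : ℝ) : EReal) ≤ f x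
  rw [hco]
  rcases eq_or_ne (f x) ⊤ with h | h
  · rw [h]; exact le_top
  · have hbot : f x ≠ ⊥ := by
      intro hb; rw [hb, le_bot_iff] at h1; exact EReal.coe_ne_bot _ h1
    obtain ⟨r, hr⟩ := S19.exists_coe (f x) hbot h
    rw [hr] at h1 h2 ⊢
    have h1' : p.1 * x ^ 2 + p.2 ≤ r := by exact_mod_cast h1
    have h2' : q.1 * x ^ 2 + q.2 ≤ r := by exact_mod_cast h2
    apply EReal.coe_le_coe_iff.2
    have hsr : s * r + t * r = r := by rw [← add_mul, hst, one_mul]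
    linarith [mul_le_mul_of_nonneg_left h1' hs, mul_le_mul_of_nonneg_left h2' ht, hsr]

lemma S19.PS_down {p : ℝ × ℝ} (hp : p ∈ PS f) {a' b' : ℝ} (ha : a' ≤ p.1) (hb : b' ≤ p.2) :
    (a', b') ∈ PS f := fun x =>
  le_trans (EReal.coe_le_coe_iff.2 (by nlinarith [sq_nonneg x])) (hp x)


lemma S19.chord (hSH : S ⊆ Hq) (hrep : ∀ x, f x = ⨆ h ∈ S, (h x : EReal))
    (hf0 : ∀ y, f y ≠ ⊥) {a₀ b₀ : ℝ} (hm : (a₀, b₀) ∈ PS f)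
    {x₁ x₂ c₁ c₂ : ℝ} (hx : x₁ ^ 2 < x₂ ^ 2)
    (h1 : f x₁ = (c₁ : EReal)) (h2 : f x₂ = (c₂ : EReal)) :
    ∃ β : ℝ, ((c₂ - c₁) / (x₂ ^ 2 - x₁ ^ 2), β) ∈ PS f := by
  set m := (c₂ - c₁) / (x₂ ^ 2 - x₁ ^ 2) with hm_def
  have ht : x₂ ^ 2 - x₁ ^ 2 > 0 := by linarith
  have hmm : m * (x₂ ^ 2 - x₁ ^ 2) = c₂ - c₁ := div_mul_cancel₀ _ (ne_of_gt ht)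
  set K := max ((m - a₀) * x₁ ^ 2) ((m - a₀) * x₂ ^ 2) + (c₁ - m * x₁ ^ 2 - b₀) with hK
  refine ⟨c₁ - m * x₁ ^ 2 - max 0 K, ?_⟩
  intro x
  rcases eq_or_ne (f x) ⊤ with hfx | hfx
  · rw [hfx]; exact le_top
  obtain ⟨r, hr⟩ := S19.exists_coe (f x) (hf0 x) hfx
  rw [hr]
  apply EReal.coe_le_coe_iff.2
  show m * x ^ 2 + (c₁ - m * x₁ ^ 2 - max 0 K) ≤ r
  have hmax : (0:ℝ) ≤ max 0 K := le_max_left _ _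
  rcases le_or_gt (x₂ ^ 2) (x ^ 2) with hcase | hcase
  · set θ := (x ^ 2 - x₂ ^ 2) / (x ^ 2 - x₁ ^ 2) with hθdef
    have ht1 : x ^ 2 - x₁ ^ 2 > 0 := by linarith
    have hθ0 : 0 ≤ θ := div_nonneg (by linarith) ht1.le
    have hθ1 : θ ≤ 1 := (div_le_one ht1).2 (by linarith)
    have hconv := S19.conv_upper hSH hrep hθ0 hθ1 h1.le hr.le
    have harg : θ * x₁ ^ 2 + (1 - θ) * x ^ 2 = x₂ ^ 2 := by
      rw [hθdef]; field_simp; ring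
    rw [harg, S19.f_sqrt_sq hSH hrep x₂, h2] at hconv
    have hkey : c₂ ≤ θ * c₁ + (1 - θ) * r := by exact_mod_cast hconv
    have hθeq : θ * (x ^ 2 - x₁ ^ 2) = x ^ 2 - x₂ ^ 2 := div_mul_cancel₀ _ (ne_of_gt ht1)
    have e1 : (m * (x ^ 2 - x₁ ^ 2) + c₁) * (x₂ ^ 2 - x₁ ^ 2)
        = (c₂ - θ * c₁) * (x ^ 2 - x₁ ^ 2) := by
      linear_combination (x ^ 2 - x₁ ^ 2) * hmm + c₁ * hθeq
    have e2 : (1 - θ) * r * (x ^ 2 - x₁ ^ 2) = r * (x₂ ^ 2 - x₁ ^ 2) := by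
      linear_combination (-r) * hθeq
    have h8 : (m * (x ^ 2 - x₁ ^ 2) + c₁) * (x₂ ^ 2 - x₁ ^ 2) ≤ r * (x₂ ^ 2 - x₁ ^ 2) := by
      rw [e1, ← e2]
      nlinarith [mul_le_mul_of_nonneg_right hkey ht1.le]
    have h9 : m * (x ^ 2 - x₁ ^ 2) + c₁ ≤ r := le_of_mul_le_mul_right h8 ht
    linarith
  rcases le_or_gt (x ^ 2) (x₁ ^ 2) with hcase2 | hcase2
  · set θ := (x₁ ^ 2 - x ^ 2) / (x₂ ^ 2 - x ^ 2) with hθdef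
    have ht2 : x₂ ^ 2 - x ^ 2 > 0 := by linarith
    have hθ0 : 0 ≤ θ := div_nonneg (by linarith) ht2.le
    have hθ1 : θ ≤ 1 := (div_le_one ht2).2 (by linarith)
    have hconv := S19.conv_upper hSH hrep hθ0 hθ1 h2.le hr.le
    have harg : θ * x₂ ^ 2 + (1 - θ) * x ^ 2 = x₁ ^ 2 := by
      rw [hθdef]; field_simp; ring
    rw [harg, S19.f_sqrt_sq hSH hrep x₁, h1] at hconv
    have hkey : c₁ ≤ θ * c₂ + (1 - θ) * r := by exact_mod_cast hconv
    have hθeq : θ * (x₂ ^ 2 - x ^ 2) = x₁ ^ 2 - x ^ 2 := div_mul_cancel₀ _ (ne_of_gt ht2)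
    have e1 : (c₁ - m * (x₁ ^ 2 - x ^ 2)) * (x₂ ^ 2 - x₁ ^ 2)
        = (c₁ - θ * c₂) * (x₂ ^ 2 - x ^ 2) := by
      linear_combination (-(x₁ ^ 2 - x ^ 2)) * hmm + c₂ * hθeq
    have e2 : (1 - θ) * r * (x₂ ^ 2 - x ^ 2) = r * (x₂ ^ 2 - x₁ ^ 2) := by
      linear_combination (-r) * hθeq
    have h8 : (c₁ - m * (x₁ ^ 2 - x ^ 2)) * (x₂ ^ 2 - x₁ ^ 2) ≤ r * (x₂ ^ 2 - x₁ ^ 2) := by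
      rw [e1, ← e2]
      nlinarith [mul_le_mul_of_nonneg_right hkey ht2.le]
    have h9 : c₁ - m * (x₁ ^ 2 - x ^ 2) ≤ r := le_of_mul_le_mul_right h8 ht
    linarith
  · have hmin := hm x
    rw [hr] at hmin
    have hmin' : a₀ * x ^ 2 + b₀ ≤ r := by exact_mod_cast hmin
    have hK1 : (m - a₀) * x ^ 2 ≤ max ((m - a₀) * x₁ ^ 2) ((m - a₀) * x₂ ^ 2) := by
      rcases le_total (m - a₀) 0 with hsg | hsg
      · exact le_trans (by nlinarith) (le_max_left _ _)
      · exact le_trans (by nlinarith) (le_max_right _ _)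
    have hK2 : K ≤ max 0 K := le_max_right _ _
    have hstep : m * x ^ 2 + (c₁ - m * x₁ ^ 2) - K ≤ a₀ * x ^ 2 + b₀ := by
      rw [hK]; linarith [hK1]
    linarith

lemma S19.dom_unb {a₀ b₀ : ℝ} (hm : (a₀, b₀) ∈ PS f) :
    (∀ T : ℝ, ∃ x, T < x ^ 2 ∧ f x < ⊤) ∨ (∀ α : ℝ, ∃ β, (α, β) ∈ PS f) := by
  by_cases h : ∀ T : ℝ, ∃ x, T < x ^ 2 ∧ f x < ⊤
  · exact Or.inl h
  · push_neg at h
    obtain ⟨T, hT⟩ := h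
    right
    intro α
    refine ⟨b₀ - |α - a₀| * max T 0, ?_⟩
    intro x
    rcases lt_or_ge T (x ^ 2) with hx | hx
    · have : f x = ⊤ := top_le_iff.1 (hT x hx)
      rw [this]; exact le_top
    · refine le_trans ?_ (hm x)
      apply EReal.coe_le_coe_iff.2
      have h1 : x ^ 2 ≤ max T 0 := le_trans hx (le_max_left _ _)
      have h2 : (0:ℝ) ≤ x ^ 2 := sq_nonneg x
      show α * x ^ 2 + (b₀ - |α - a₀| * max T 0) ≤ a₀ * x ^ 2 + b₀
      nlinarith [mul_nonneg (sub_nonneg.2 (le_abs_self (α - a₀))) h2,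
        mul_nonneg (abs_nonneg (α - a₀)) (sub_nonneg.2 h1)]

lemma S19.rec_aux {f g : ℝ → EReal} {Sf Sg : Set (ℝ → ℝ)}
    (hSfH : Sf ⊆ Hq) (hfrep : ∀ x, f x = ⨆ h ∈ Sf, (h x : EReal)) (hf0 : ∀ y, f y ≠ ⊥)
    (hSgH : Sg ⊆ Hq) (hgrep : ∀ x, g x = ⨆ h ∈ Sg, (h x : EReal)) (hg0 : ∀ y, g y ≠ ⊥)
    {af bf ag bg : ℝ} (hmf : (af, bf) ∈ PS f) (hmg : (ag, bg) ∈ PS g)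
    {a b σ : ℝ} (hcon : ∀ p ∈ PS f, ∀ q ∈ PS g, p.1 + q.1 ≤ σ)
    (hab : ∀ x : ℝ, ((a * x ^ 2 + b : ℝ) : EReal) ≤ f x + g x)
    {x₁ x₂ x₃ c₁f c₁g c₂ c₃ : ℝ}
    (h1f : f x₁ = (c₁f : EReal)) (h1g : g x₁ = (c₁g : EReal))
    (h2 : x₁ ^ 2 < x₂ ^ 2) (h3 : x₁ ^ 2 < x₃ ^ 2) (hle : x₂ ^ 2 ≤ x₃ ^ 2)
    (hfx2 : f x₂ = (c₂ : EReal)) (hgx3 : g x₃ = (c₃ : EReal)) :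
    a * x₂ ^ 2 + b ≤ c₁f + c₁g + σ * (x₂ ^ 2 - x₁ ^ 2) := by
  obtain ⟨βf, hβf⟩ := S19.chord hSfH hfrep hf0 hmf h2 h1f hfx2
  obtain ⟨βg, hβg⟩ := S19.chord hSgH hgrep hg0 hmg h3 h1g hgx3
  have hσ : (c₂ - c₁f) / (x₂ ^ 2 - x₁ ^ 2) + (c₃ - c₁g) / (x₃ ^ 2 - x₁ ^ 2) ≤ σ :=
    hcon _ hβf _ hβg
  set θ := (x₃ ^ 2 - x₂ ^ 2) / (x₃ ^ 2 - x₁ ^ 2) with hθdef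
  have ht31 : x₃ ^ 2 - x₁ ^ 2 > 0 := by linarith
  have hne31 : x₃ ^ 2 - x₁ ^ 2 ≠ 0 := ne_of_gt ht31
  have hθ0 : 0 ≤ θ := div_nonneg (by linarith) ht31.le
  have hθ1 : θ ≤ 1 := (div_le_one ht31).2 (by linarith)
  have hGt := S19.conv_upper hSgH hgrep hθ0 hθ1 h1g.le hgx3.le
  have harg : θ * x₁ ^ 2 + (1 - θ) * x₃ ^ 2 = x₂ ^ 2 := by
    rw [hθdef]; field_simp; ring
  rw [harg] at hGt
  have hFt : f (Real.sqrt (x₂ ^ 2)) = (c₂ : EReal) := by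
    rw [S19.f_sqrt_sq hSfH hfrep x₂, hfx2]
  have habs := hab (Real.sqrt (x₂ ^ 2))
  rw [Real.sq_sqrt (sq_nonneg x₂), hFt] at habs
  have hcomb : ((a * x₂ ^ 2 + b : ℝ) : EReal) ≤ ((c₂ + (θ * c₁g + (1 - θ) * c₃) : ℝ) : EReal) := by
    calc ((a * x₂ ^ 2 + b : ℝ) : EReal) ≤ (c₂ : EReal) + g (Real.sqrt (x₂ ^ 2)) := habs
    _ ≤ (c₂ : EReal) + ((θ * c₁g + (1 - θ) * c₃ : ℝ) : EReal) := add_le_add (le_refl _) hGt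
    _ = _ := by rw [← EReal.coe_add]
  have hreal : a * x₂ ^ 2 + b ≤ c₂ + (θ * c₁g + (1 - θ) * c₃) := by exact_mod_cast hcomb
  have ht21 : x₂ ^ 2 - x₁ ^ 2 > 0 := by linarith
  have e1 : c₂ = c₁f + (c₂ - c₁f) / (x₂ ^ 2 - x₁ ^ 2) * (x₂ ^ 2 - x₁ ^ 2) := by
    field_simp
    ring
  have e2 : θ * c₁g + (1 - θ) * c₃
      = c₁g + (c₃ - c₁g) / (x₃ ^ 2 - x₁ ^ 2) * (x₂ ^ 2 - x₁ ^ 2) := by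
    rw [hθdef]; field_simp; ring
  linarith [mul_le_mul_of_nonneg_right hσ ht21.le, hreal, e1, e2]

end Stmt19Aux
section Stmt19Core

lemma S19.core (f g : ℝ → EReal) (hf0 : ∀ y, f y ≠ ⊥) (hg0 : ∀ y, g y ≠ ⊥)
    (hf : ConvexIn Hq f) (hg : ConvexIn Hq g)
    (hdom : ∃ x : ℝ, f x < ⊤ ∧ g x < ⊤) :
    PS (fun x => f x + g x) = closure (PS f + PS g) := by
  obtain ⟨Sf, hSfne, hSfH, hfrep⟩ := hf
  obtain ⟨Sg, hSgne, hSgH, hgrep⟩ := hg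
  obtain ⟨x₁, hx1f, hx1g⟩ := hdom
  obtain ⟨p₀, hp₀⟩ := S19.PS_nonempty ⟨Sf, hSfne, hSfH, hfrep⟩
  obtain ⟨q₀, hq₀⟩ := S19.PS_nonempty ⟨Sg, hSgne, hSgH, hgrep⟩
  have hp₀' : (p₀.1, p₀.2) ∈ PS f := by rwa [Prod.mk.eta]
  have hq₀' : (q₀.1, q₀.2) ∈ PS g := by rwa [Prod.mk.eta]
  apply Subset.antisymm
  swap
  · apply closure_minimal
    · rintro z hz
      rw [Set.mem_add] at hz
      obtain ⟨p, hp, q, hq, rfl⟩ := hz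
      intro x
      have he : ((p + q).1 * x ^ 2 + (p + q).2 : ℝ)
          = (p.1 * x ^ 2 + p.2) + (q.1 * x ^ 2 + q.2) := by
        simp only [Prod.fst_add, Prod.snd_add]; ring
      show (((p + q).1 * x ^ 2 + (p + q).2 : ℝ) : EReal) ≤ f x + g x
      rw [he, EReal.coe_add]
      exact add_le_add (hp x) (hq x)
    · have hre : PS (fun x => f x + g x)
          = ⋂ x : ℝ, (fun ab : ℝ × ℝ => ((ab.1 * x ^ 2 + ab.2 : ℝ) : EReal)) ⁻¹' Set.Iic (f x + g x) := by
        ext ab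
        simp only [PS, Set.mem_setOf_eq, Set.mem_iInter, Set.mem_preimage, Set.mem_Iic]
      rw [hre]
      apply isClosed_iInter
      intro x
      exact IsClosed.preimage (continuous_coe_real_ereal.comp (by fun_prop)) isClosed_Iic
  · intro ab hab
    by_contra hN
    obtain ⟨L, s, hLs, hsep⟩ := geometric_hahn_banach_point_closed
      (((S19.PS_convex f).add (S19.PS_convex g)).closure) isClosed_closure hN
    set u := L (1, 0) with hu_def
    set v := L (0, 1) with hv_def
    have hL : ∀ z : ℝ × ℝ, L z = u * z.1 + v * z.2 := by
      intro z
      have hz : z = z.1 • ((1:ℝ), (0:ℝ)) + z.2 • ((0:ℝ), (1:ℝ)) := by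
        ext <;> simp
      conv_lhs => rw [hz]
      rw [map_add, map_smul, map_smul, smul_eq_mul, smul_eq_mul, ← hu_def, ← hv_def]
      ring
    have hsep' : ∀ p ∈ PS f, ∀ q ∈ PS g, s < u * (p.1 + q.1) + v * (p.2 + q.2) := by
      intro p hp q hq
      have h := hsep _ (subset_closure (Set.add_mem_add hp hq))
      rw [hL] at h
      simpa using h
    have habL : u * ab.1 + v * ab.2 < s := by rw [← hL]; exact hLs
    have hv : v ≤ 0 := by
      by_contra hvpos
      push_neg at hvpos
      set n := (u * (p₀.1 + q₀.1) + v * (p₀.2 + q₀.2) - s) / v + 1 with hn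
      have hd : p₀.2 - max n 0 ≤ p₀.2 := by
        have := le_max_right n 0; linarith
      have hdown := S19.PS_down hp₀ (le_refl p₀.1) hd
      have h := hsep' _ hdown _ hq₀
      simp only at h
      have hvn : v * n ≤ v * max n 0 := mul_le_mul_of_nonneg_left (le_max_left _ _) hvpos.le
      have hvn2 : v * n = u * (p₀.1 + q₀.1) + v * (p₀.2 + q₀.2) - s + v := by
        rw [hn]; field_simp
      nlinarith [h, hvn, hvn2]
    rcases lt_or_ge 0 u with hu | hu
    · -- u > 0 : go far left in the first coordinate
      set α := min p₀.1 ((s - v * (p₀.2 + q₀.2) - u * q₀.1) / u - 1) with hα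
      have hα1 : α ≤ p₀.1 := min_le_left _ _
      have h := hsep' _ (S19.PS_down hp₀ hα1 le_rfl) _ hq₀
      simp only at h
      have hα2 : α ≤ (s - v * (p₀.2 + q₀.2) - u * q₀.1) / u - 1 := min_le_right _ _
      have hua : u * α ≤ s - v * (p₀.2 + q₀.2) - u * q₀.1 - u := by
        have h3 : u * ((s - v * (p₀.2 + q₀.2) - u * q₀.1) / u - 1)
            = s - v * (p₀.2 + q₀.2) - u * q₀.1 - u := by
          field_simp
        nlinarith [mul_le_mul_of_nonneg_left hα2 hu.le]
      linarith
    rcases hv.lt_or_eq with hv' | hv'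
    · -- v < 0, u ≤ 0
      set x₀ := Real.sqrt (u / v) with hx₀def
      have hx₀ : x₀ ^ 2 = u / v := Real.sq_sqrt (div_nonneg_of_nonpos hu hv'.le)
      have hXv : (ab.1 * x₀ ^ 2 + ab.2) * v = u * ab.1 + v * ab.2 := by
        rw [hx₀]; field_simp [hv'.ne]
      have hsv : s / v < ab.1 * x₀ ^ 2 + ab.2 := by
        rw [div_lt_iff_of_neg hv']
        linarith [hXv, habL]
      have h1 : ((s / v : ℝ) : EReal) < f x₀ + g x₀ :=
        lt_of_lt_of_le (EReal.coe_lt_coe_iff.2 hsv) (hab x₀)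
      obtain ⟨c, c', hc, hc', hsum⟩ := S19.split _ _ (hf0 x₀) (hg0 x₀) _ h1
      obtain ⟨p, hp, hpc⟩ := S19.PS_exists_gt hSfH hfrep hc
      obtain ⟨q, hq, hqc⟩ := S19.PS_exists_gt hSgH hgrep hc'
      have h := hsep' p hp q hq
      have hueq : u = x₀ ^ 2 * v := by rw [hx₀]; exact (div_mul_cancel₀ u hv'.ne).symm
      have hval : u * (p.1 + q.1) + v * (p.2 + q.2)
          = v * ((p.1 * x₀ ^ 2 + p.2) + (q.1 * x₀ ^ 2 + q.2)) := by rw [hueq]; ring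
      have h2 : v * ((p.1 * x₀ ^ 2 + p.2) + (q.1 * x₀ ^ 2 + q.2)) < v * (c + c') := by
        apply mul_lt_mul_of_neg_left _ hv'
        linarith
      have h3 : v * (c + c') ≤ v * (s / v) := mul_le_mul_of_nonpos_left hsum hv
      have h4 : v * (s / v) = s := by rw [mul_comm, div_mul_cancel₀ _ hv'.ne]
      linarith [h, hval, h2, h3, h4]
    · -- v = 0
      rw [hv'] at habL hsep'
      rcases hu.lt_or_eq with hu' | hu'
      · -- u < 0 : the recession case
        have hcon : ∀ p ∈ PS f, ∀ q ∈ PS g, p.1 + q.1 ≤ s / u := by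
          intro p hp q hq
          have h := hsep' p hp q hq
          have : p.1 + q.1 < s / u := (lt_div_iff_of_neg hu').2 (by linarith)
          exact this.le
        have haσ : s / u < ab.1 := by
          rw [div_lt_iff_of_neg hu']
          linarith
        rcases S19.dom_unb hp₀' with hUf | hAll
        swap
        · obtain ⟨β, hβ⟩ := hAll (s / u - q₀.1 + 1)
          have := hcon _ hβ _ hq₀
          simp only at this
          linarith
        rcases S19.dom_unb hq₀' with hUg | hAll
        swap
        · obtain ⟨β, hβ⟩ := hAll (s / u - p₀.1 + 1)
          have := hcon _ hp₀ _ hβ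
          simp only at this
          linarith
        obtain ⟨c₁f, h1f⟩ := S19.exists_coe _ (hf0 x₁) hx1f.ne
        obtain ⟨c₁g, h1g⟩ := S19.exists_coe _ (hg0 x₁) hx1g.ne
        set T := max (x₁ ^ 2) ((c₁f + c₁g - (s / u) * x₁ ^ 2 - ab.2) / (ab.1 - s / u)) with hT
        obtain ⟨x₂, hx₂T, hx₂f⟩ := hUf T
        obtain ⟨x₃, hx₃T, hx₃g⟩ := hUg T
        obtain ⟨c₂, h2f⟩ := S19.exists_coe _ (hf0 x₂) hx₂f.ne
        obtain ⟨c₃, h3g⟩ := S19.exists_coe _ (hg0 x₃) hx₃g.ne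
        have h2 : x₁ ^ 2 < x₂ ^ 2 := lt_of_le_of_lt (le_max_left _ _) hx₂T
        have h3 : x₁ ^ 2 < x₃ ^ 2 := lt_of_le_of_lt (le_max_left _ _) hx₃T
        have hbig2 : (c₁f + c₁g - (s / u) * x₁ ^ 2 - ab.2) / (ab.1 - s / u) < x₂ ^ 2 :=
          lt_of_le_of_lt (le_max_right _ _) hx₂T
        have hbig3 : (c₁f + c₁g - (s / u) * x₁ ^ 2 - ab.2) / (ab.1 - s / u) < x₃ ^ 2 :=
          lt_of_le_of_lt (le_max_right _ _) hx₃T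
        have hden : (0:ℝ) < ab.1 - s / u := by linarith
        rcases le_total (x₂ ^ 2) (x₃ ^ 2) with hle | hle
        · have key := S19.rec_aux hSfH hfrep hf0 hSgH hgrep hg0 hp₀' hq₀' hcon hab
            h1f h1g h2 h3 hle h2f h3g
          rw [div_lt_iff₀ hden] at hbig2
          linarith [key, hbig2]
        · have hcon' : ∀ q ∈ PS g, ∀ p ∈ PS f, q.1 + p.1 ≤ s / u := by
            intro q hq p hp
            have := hcon p hp q hq; linarith
          have hab' : ∀ x : ℝ, ((ab.1 * x ^ 2 + ab.2 : ℝ) : EReal) ≤ g x + f x := by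
            intro x
            rw [add_comm (g x)]
            exact hab x
          have key := S19.rec_aux hSgH hgrep hg0 hSfH hfrep hf0 hq₀' hp₀' hcon' hab'
            h1g h1f h3 h2 hle h3g h2f
          rw [div_lt_iff₀ hden] at hbig3
          linarith [key, hbig3]
      · -- u = 0
        have h := hsep' p₀ hp₀ q₀ hq₀
        rw [hu'] at h habL
        simp only [zero_mul, add_zero, zero_add] at h habL
        linarith

end Stmt19Core
section Stmt19Final

noncomputable def eH : ℝ × ℝ → (ℝ → ℝ) := fun ab => psiQ ab.1 ab.2
noncomputable def eL : ℝ × ℝ → (ℝ → ℝ) × ℝ := fun ab => (phiQ ab.1, -ab.2)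

lemma S19.eH_cont : Continuous eH := by
  apply continuous_pi
  intro x
  show Continuous fun ab : ℝ × ℝ => ab.1 * x ^ 2 + ab.2
  fun_prop

lemma S19.rH_cont : Continuous (fun h : ℝ → ℝ => ((h 1 - h 0, h 0) : ℝ × ℝ)) :=
  ((continuous_apply 1).sub (continuous_apply 0)).prodMk (continuous_apply 0)

lemma S19.rH_psi (a b : ℝ) : (((psiQ a b) 1 - (psiQ a b) 0, (psiQ a b) 0) : ℝ × ℝ) = (a, b) := by
  simp [psiQ]

lemma S19.eH_add (p q : ℝ × ℝ) : eH (p + q) = eH p + eH q := by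
  funext x
  simp only [eH, psiQ, Prod.fst_add, Prod.snd_add, Pi.add_apply]
  ring

lemma S19.image_eH_add (A B : Set (ℝ × ℝ)) : eH '' (A + B) = eH '' A + eH '' B := by
  ext h
  constructor
  · rintro ⟨z, hz, rfl⟩
    rw [Set.mem_add] at hz
    obtain ⟨p, hp, q, hq, rfl⟩ := hz
    rw [S19.eH_add]
    exact Set.add_mem_add ⟨p, hp, rfl⟩ ⟨q, hq, rfl⟩
  · intro hz
    rw [Set.mem_add] at hz
    obtain ⟨h₁, ⟨p, hp, rfl⟩, h₂, ⟨q, hq, rfl⟩, rfl⟩ := hz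
    exact ⟨p + q, Set.add_mem_add hp hq, S19.eH_add p q⟩

lemma S19.transferH (A : Set (ℝ × ℝ)) : closure (eH '' A) ∩ Hq = eH '' closure A := by
  apply Set.Subset.antisymm
  · rintro h ⟨hcl, a, b, rfl⟩
    refine ⟨(a, b), ?_, rfl⟩
    have h1 : (((psiQ a b) 1 - (psiQ a b) 0, (psiQ a b) 0) : ℝ × ℝ)
        ∈ (fun h : ℝ → ℝ => ((h 1 - h 0, h 0) : ℝ × ℝ)) '' closure (eH '' A) :=
      Set.mem_image_of_mem _ hcl
    have h2 := image_closure_subset_closure_image S19.rH_cont h1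
    rw [Set.image_image] at h2
    have h3 : (fun ab : ℝ × ℝ => (((eH ab) 1 - (eH ab) 0, (eH ab) 0) : ℝ × ℝ)) = id := by
      funext ab
      exact S19.rH_psi ab.1 ab.2
    rw [h3, Set.image_id] at h2
    rw [S19.rH_psi a b] at h2
    exact h2
  · rintro h ⟨p, hp, rfl⟩
    exact ⟨image_closure_subset_closure_image S19.eH_cont (Set.mem_image_of_mem _ hp),
      p.1, p.2, rfl⟩

lemma S19.suppIn_eq (f : ℝ → EReal) : suppIn Hq f = eH '' PS f := by
  ext h
  constructor
  · rintro ⟨⟨a, b, rfl⟩, hle⟩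
    exact ⟨(a, b), fun x => hle x, rfl⟩
  · rintro ⟨p, hp, rfl⟩
    exact ⟨⟨p.1, p.2, rfl⟩, fun x => hp x⟩

lemma S19.eL_cont : Continuous eL := by
  apply Continuous.prodMk
  · apply continuous_pi
    intro x
    show Continuous fun ab : ℝ × ℝ => ab.1 * x ^ 2
    fun_prop
  · exact continuous_snd.neg

lemma S19.rL_cont : Continuous (fun p : (ℝ → ℝ) × ℝ => ((p.1 1, -p.2) : ℝ × ℝ)) :=
  ((continuous_apply 1).comp continuous_fst).prodMk continuous_snd.neg

lemma S19.rL_phi (a b : ℝ) : (((phiQ a) 1, -b) : ℝ × ℝ) = (a, -b) := by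
  simp [phiQ]

lemma S19.eL_add (p q : ℝ × ℝ) : eL (p + q) = eL p + eL q := by
  rw [Prod.ext_iff]
  constructor
  · funext x
    simp only [eL, phiQ, Prod.fst_add, Prod.snd_add, Pi.add_apply]
    ring
  · simp only [eL, Prod.fst_add, Prod.snd_add]
    ring

lemma S19.image_eL_add (A B : Set (ℝ × ℝ)) : eL '' (A + B) = eL '' A + eL '' B := by
  ext h
  constructor
  · rintro ⟨z, hz, rfl⟩
    rw [Set.mem_add] at hz
    obtain ⟨p, hp, q, hq, rfl⟩ := hz
    rw [S19.eL_add]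
    exact Set.add_mem_add ⟨p, hp, rfl⟩ ⟨q, hq, rfl⟩
  · intro hz
    rw [Set.mem_add] at hz
    obtain ⟨h₁, ⟨p, hp, rfl⟩, h₂, ⟨q, hq, rfl⟩, rfl⟩ := hz
    exact ⟨p + q, Set.add_mem_add hp hq, S19.eL_add p q⟩

lemma S19.transferL (A : Set (ℝ × ℝ)) :
    closure (eL '' A) ∩ {p : (ℝ → ℝ) × ℝ | p.1 ∈ Lq} = eL '' closure A := by
  apply Set.Subset.antisymm
  · rintro ⟨l, c⟩ ⟨hcl, hLq⟩
    obtain ⟨a, rfl⟩ := hLq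
    refine ⟨(a, -c), ?_, by simp [eL]⟩
    have h1 : (((phiQ a) 1, -c) : ℝ × ℝ)
        ∈ (fun p : (ℝ → ℝ) × ℝ => ((p.1 1, -p.2) : ℝ × ℝ)) '' closure (eL '' A) :=
      Set.mem_image_of_mem _ hcl
    have h2 := image_closure_subset_closure_image S19.rL_cont h1
    rw [Set.image_image] at h2
    have h3 : (fun ab : ℝ × ℝ => (((eL ab).1 1, -(eL ab).2) : ℝ × ℝ)) = id := by
      funext ab
      show (((phiQ ab.1) 1, -(-ab.2)) : ℝ × ℝ) = ab
      rw [S19.rL_phi, neg_neg]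
    rw [h3, Set.image_id] at h2
    rw [S19.rL_phi a c] at h2
    exact h2
  · rintro h ⟨p, hp, rfl⟩
    exact ⟨image_closure_subset_closure_image S19.eL_cont (Set.mem_image_of_mem _ hp),
      ⟨p.1, rfl⟩⟩

lemma S19.epiConj_eq (f : ℝ → EReal) (hf0 : ∀ y, f y ≠ ⊥) : epiConj Lq f = eL '' PS f := by
  ext p
  constructor
  · rintro ⟨⟨a, ha⟩, hle⟩
    refine ⟨(a, -p.2), ?_, ?_⟩
    · intro x
      have h1 : ((a * x ^ 2 : ℝ) : EReal) - f x ≤ (p.2 : EReal) := by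
        refine le_trans ?_ hle
        rw [← ha]
        exact le_iSup (fun x => (((phiQ a x : ℝ) : EReal) - f x)) x
      have h2 := (S19.esub (a * x ^ 2) p.2 (f x) (hf0 x)).1 h1
      have h3 : (a * x ^ 2 - p.2 : ℝ) = a * x ^ 2 + -p.2 := by ring
      rw [h3] at h2
      exact h2
    · have he : eL (a, -p.2) = (phiQ a, p.2) := by simp [eL]
      rw [he, ha]
  · rintro ⟨q, hq, rfl⟩
    refine ⟨⟨q.1, rfl⟩, ?_⟩
    show fconj f (phiQ q.1) ≤ ((-q.2 : ℝ) : EReal)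
    apply iSup_le
    intro x
    have h2 : ((q.1 * x ^ 2 - -q.2 : ℝ) : EReal) ≤ f x := by
      rw [show (q.1 * x ^ 2 - -q.2 : ℝ) = q.1 * x ^ 2 + q.2 by ring]
      exact hq x
    exact (S19.esub (q.1 * x ^ 2) (-q.2) (f x) (hf0 x)).2 h2

end Stmt19Final
/-- for ℋ-convex `f, g : ℝ → ℝ ∪ {+∞}` with `dom f ∩ dom g ≠ ∅`,
the closure (in the pointwise convergence topology on ℋ) of `supp f + supp g` is an
ℋ-convex set, `supp (f + g) = cl(supp f + supp g)`, and equivalently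
`cl(epi f* + epi g*) = epi (f + g)*` in `𝓛 × ℝ`. -/
theorem stmt19 (f g : ℝ → EReal) (hf0 : ∀ y, f y ≠ ⊥) (hg0 : ∀ y, g y ≠ ⊥)
    (hf : ConvexIn Hq f) (hg : ConvexIn Hq g)
    (hdom : ∃ x : ℝ, f x < ⊤ ∧ g x < ⊤) :
    ConvexSetIn Hq (closure (suppIn Hq f + suppIn Hq g) ∩ Hq) ∧
    suppIn Hq (fun x => f x + g x) = closure (suppIn Hq f + suppIn Hq g) ∩ Hq ∧
    closure (epiConj Lq f + epiConj Lq g) ∩ {p : (ℝ → ℝ) × ℝ | p.1 ∈ Lq}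
      = epiConj Lq (fun x => f x + g x) := by
  have hcore := S19.core f g hf0 hg0 hf hg hdom
  have hfg0 : ∀ y, f y + g y ≠ ⊥ := by
    intro y
    rw [Ne, EReal.add_eq_bot_iff]
    push_neg
    exact ⟨hf0 y, hg0 y⟩
  have h2 : suppIn Hq (fun x => f x + g x) = closure (suppIn Hq f + suppIn Hq g) ∩ Hq := by
    rw [S19.suppIn_eq f, S19.suppIn_eq g, S19.suppIn_eq (fun x => f x + g x),
      ← S19.image_eH_add, S19.transferH, ← hcore]
  have h3 : closure (epiConj Lq f + epiConj Lq g) ∩ {p : (ℝ → ℝ) × ℝ | p.1 ∈ Lq}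
      = epiConj Lq (fun x => f x + g x) := by
    rw [S19.epiConj_eq f hf0, S19.epiConj_eq g hg0, S19.epiConj_eq _ hfg0,
      ← S19.image_eL_add, S19.transferL, ← hcore]
  refine ⟨?_, h2, h3⟩
  rw [← h2]
  constructor
  · exact fun l hl => hl.1
  · intro l₀ hl₀ hl₀n
    have hnot : ¬ ∀ x, ((l₀ x : ℝ) : EReal) ≤ f x + g x := fun hcon => hl₀n ⟨hl₀, hcon⟩
    push_neg at hnot
    obtain ⟨x, hx⟩ := hnot
    refine ⟨x, lt_of_le_of_lt ?_ hx⟩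
    exact iSup₂_le fun l hl => hl.2 x
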